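/- arXiv:0904.0843 — 5 statements merged into one kernel-verified Lean document; each statement's English description precedes it below -/
import Mathlib

section
/- Let n ≥ 1 and a₁,…,aₙ ∈ ℝ, write ā = n⁻¹ Σᵢ aᵢ, and assume Σᵢ (aᵢ − ā)² > 0. Then the minimum of Σᵢ (n pᵢ − 1)² over all vectors p = (p₁,…,pₙ) ∈ ℝⁿ satisfying Σᵢ pᵢ = 1 and Σᵢ pᵢ aᵢ = 0 is attained and equals (Σᵢ aᵢ)² / Σᵢ (aᵢ − ā)². -/
theorem stmt_0 (n : ℕ) (hn : 1 ≤ n) (a : Fin n → ℝ)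
    (abar : ℝ) (habar : abar = (∑ i, a i) / n)
    (hvar : 0 < ∑ i, (a i - abar) ^ 2) :
    IsLeast
      {v : ℝ | ∃ p : Fin n → ℝ, (∑ i, p i) = 1 ∧ (∑ i, p i * a i) = 0 ∧
        v = ∑ i, ((n : ℝ) * p i - 1) ^ 2}
      ((∑ i, a i) ^ 2 / ∑ i, (a i - abar) ^ 2) := by
  have hn0 : (n : ℝ) ≠ 0 := Nat.cast_ne_zero.mpr (by omega)
  set S := ∑ i, a i with hS
  set V := ∑ i, (a i - abar) ^ 2 with hV
  have hVne : V ≠ 0 := ne_of_gt hvar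
  have hsum_b : ∑ i, (a i - abar) = 0 := by
    rw [Finset.sum_sub_distrib, Finset.sum_const, Finset.card_univ, Fintype.card_fin,
      habar, ← hS]
    field_simp
    rw [nsmul_eq_mul, mul_div_cancel₀ _ hn0, sub_self]
  have hba : ∑ i, (a i - abar) * a i = V := by
    have h1 : ∀ i : Fin n, (a i - abar) * a i = (a i - abar) ^ 2 + abar * (a i - abar) := by
      intro i; ring
    rw [Finset.sum_congr rfl fun i _ => h1 i, Finset.sum_add_distrib,
      ← Finset.mul_sum, hsum_b, mul_zero, add_zero]
  constructor
  · refine ⟨fun i => (1 - S * (a i - abar) / V) / n, ?_, ?_, ?_⟩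
    · rw [← Finset.sum_div]
      rw [show (∑ i, (1 - S * (a i - abar) / V)) =
        (n : ℝ) - (S / V) * ∑ i, (a i - abar) by
          rw [Finset.sum_sub_distrib, Finset.sum_const, Finset.card_univ, Fintype.card_fin,
            Finset.mul_sum]
          congr 1
          · simp
          · apply Finset.sum_congr rfl; intro i _; ring]
      rw [hsum_b]
      field_simp
      ring
    · have : ∀ i : Fin n, (1 - S * (a i - abar) / V) / n * a i =
        (a i - (S / V) * ((a i - abar) * a i)) / n := by
        intro i; field_simp
      rw [Finset.sum_congr rfl fun i _ => this i, ← Finset.sum_div,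
        Finset.sum_sub_distrib, ← Finset.mul_sum, hba, ← hS]
      field_simp
      ring
    · have : ∀ i : Fin n, ((n : ℝ) * ((1 - S * (a i - abar) / V) / n) - 1) ^ 2 =
        (S / V) ^ 2 * (a i - abar) ^ 2 := by
        intro i
        rw [mul_div_cancel₀ _ hn0]
        field_simp
        ring
      rw [Finset.sum_congr rfl fun i _ => this i, ← Finset.mul_sum, ← hV]
      field_simp
  · rintro v ⟨p, hp1, hp2, rfl⟩
    have hqb : ∑ i, ((n : ℝ) * p i - 1) * (a i - abar) = -S := by
      have : ∀ i : Fin n, ((n : ℝ) * p i - 1) * (a i - abar) =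
        (n : ℝ) * (p i * a i) - ((n : ℝ) * abar) * p i - (a i - abar) := by
        intro i; ring
      rw [Finset.sum_congr rfl fun i _ => this i]
      rw [Finset.sum_sub_distrib, Finset.sum_sub_distrib, ← Finset.mul_sum, ← Finset.mul_sum,
        hp1, hp2, hsum_b, habar]
      field_simp
      ring
    have hcs := Finset.sum_mul_sq_le_sq_mul_sq Finset.univ
      (fun i => (n : ℝ) * p i - 1) (fun i => a i - abar)
    rw [hqb] at hcs
    have hcs' : S ^ 2 ≤ (∑ i, ((n : ℝ) * p i - 1) ^ 2) * V := by
      calc S ^ 2 = (-S) ^ 2 := by ring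
      _ ≤ _ := hcs
    exact (div_le_iff₀ hvar).mpr hcs'
end

section
/- Let n ≥ 1 and a₁,…,aₙ ∈ ℝ with minᵢ aᵢ < 0 < maxᵢ aᵢ. Then there exists a unique λ ∈ ℝ such that 1 + λaᵢ > 0 for all i and Σᵢ aᵢ/(1 + λaᵢ) = 0. Moreover the weights pᵢ = 1/(n(1 + λaᵢ)) satisfy pᵢ > 0, Σᵢ pᵢ = 1 and Σᵢ pᵢ aᵢ = 0, and they maximize Πᵢ (n pᵢ) over all (p₁,…,pₙ) with pᵢ ≥ 0, Σᵢ pᵢ = 1 and Σᵢ pᵢ aᵢ = 0; consequently −2 log max{Πᵢ(npᵢ) : pᵢ ≥ 0, Σᵢpᵢ = 1, Σᵢpᵢaᵢ = 0} = 2 Σᵢ log(1 + λaᵢ). -/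
open Finset

lemma aux_mono {n : ℕ} (a : Fin n → ℝ) {l l' : ℝ} (h : l ≤ l')
    (hl : ∀ i, 0 < 1 + l * a i) (hl' : ∀ i, 0 < 1 + l' * a i) (i : Fin n) :
    a i / (1 + l' * a i) ≤ a i / (1 + l * a i) := by
  rw [div_le_div_iff₀ (hl' i) (hl i)]
  nlinarith [sq_nonneg (a i), mul_nonneg (sq_nonneg (a i)) (sub_nonneg.2 h)]

lemma aux_mono_strict {n : ℕ} (a : Fin n → ℝ) {l l' : ℝ} (h : l < l')
    (hl : ∀ i, 0 < 1 + l * a i) (hl' : ∀ i, 0 < 1 + l' * a i) {i : Fin n}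
    (hai : a i ≠ 0) :
    a i / (1 + l' * a i) < a i / (1 + l * a i) := by
  rw [div_lt_div_iff₀ (hl' i) (hl i)]
  nlinarith [mul_pos (pow_pos (abs_pos.2 hai) 2) (sub_pos.2 h), sq_abs (a i)]

lemma aux_exists_pos (n : ℕ) (a : Fin n → ℝ) (hpos : ∃ i, 0 < a i) :
    ∃ lam : ℝ, lam ≤ 0 ∧ (∀ i, 0 < 1 + lam * a i) ∧
      0 < ∑ i, a i / (1 + lam * a i) := by
  obtain ⟨j, hj⟩ := hpos
  obtain ⟨i₀, -, hmax⟩ := Finset.exists_max_image univ a ⟨j, mem_univ j⟩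
  set M := a i₀ with hM
  have hM0 : 0 < M := lt_of_lt_of_le hj (hmax j (mem_univ j))
  set S := ∑ i, |a i| with hS
  have hS0 : 0 ≤ S := Finset.sum_nonneg fun i _ => abs_nonneg _
  set δ := M / (M + S + 1) with hδ
  have hδ0 : 0 < δ := div_pos hM0 (by linarith)
  have hδ1 : δ < 1 := (div_lt_one (by linarith)).2 (by linarith)
  set lam := (δ - 1) / M with hlam
  have hlam0 : lam ≤ 0 :=
    div_nonpos_of_nonpos_of_nonneg (by linarith) (le_of_lt hM0)
  have hlamM : lam * M = δ - 1 := by rw [hlam]; field_simp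
  have hden : ∀ i, 0 < 1 + lam * a i := by
    intro i
    rcases le_or_gt (a i) 0 with h | h
    · nlinarith [mul_nonneg (neg_nonneg.2 hlam0) (neg_nonneg.2 h)]
    · have hle : a i ≤ M := hmax i (mem_univ i)
      have hlama : lam * a i = (δ - 1) * a i / M := by rw [hlam]; ring
      have heq : 1 + (δ - 1) * a i / M = (M + (δ - 1) * a i) / M := by
        field_simp
      rw [hlama, heq]
      exact div_pos (by nlinarith) hM0
  refine ⟨lam, hlam0, hden, ?_⟩
  have hterm : ∀ i ∈ univ.erase i₀, -|a i| ≤ a i / (1 + lam * a i) := by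
    intro i _
    rcases le_or_gt 0 (a i) with h | h
    · exact le_trans (neg_nonpos_of_nonneg (abs_nonneg _))
        (div_nonneg h (le_of_lt (hden i)))
    · have hd1 : 1 ≤ 1 + lam * a i := by
        nlinarith [mul_nonneg (neg_nonneg.2 hlam0) (neg_nonneg.2 (le_of_lt h))]
      rw [abs_of_neg h, neg_neg]
      rw [le_div_iff₀ (hden i)]
      nlinarith
  have hsplit : a i₀ / (1 + lam * a i₀) + ∑ i ∈ univ.erase i₀, a i / (1 + lam * a i)
      = ∑ i, a i / (1 + lam * a i) :=
    Finset.add_sum_erase _ (fun i => a i / (1 + lam * a i)) (mem_univ i₀)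
  have hd0 : 1 + lam * a i₀ = δ := by rw [← hM]; linarith [hlamM]
  have hmain : a i₀ / (1 + lam * a i₀) = M + S + 1 := by
    rw [hd0, ← hM, hδ, div_div_eq_mul_div, mul_comm, mul_div_assoc,
      div_self hM0.ne', mul_one]
  have hrest : -S ≤ ∑ i ∈ univ.erase i₀, a i / (1 + lam * a i) := by
    have h1 : ∑ i ∈ univ.erase i₀, |a i| ≤ S :=
      Finset.sum_le_sum_of_subset_of_nonneg (Finset.subset_univ _)
        (fun i _ _ => abs_nonneg _)
    have h2 : ∑ i ∈ univ.erase i₀, -|a i| ≤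
        ∑ i ∈ univ.erase i₀, a i / (1 + lam * a i) := Finset.sum_le_sum hterm
    rw [Finset.sum_neg_distrib] at h2
    linarith
  rw [← hsplit]
  nlinarith [hmain, hrest]

theorem stmt_2 (n : ℕ) (hn : 1 ≤ n) (a : Fin n → ℝ)
    (hneg : ∃ i, a i < 0) (hpos : ∃ i, 0 < a i) :
    ∃ lam : ℝ,
      ((∀ i, 0 < 1 + lam * a i) ∧ (∑ i, a i / (1 + lam * a i)) = 0) ∧
      (∀ lam' : ℝ,
        ((∀ i, 0 < 1 + lam' * a i) ∧ (∑ i, a i / (1 + lam' * a i)) = 0) → lam' = lam) ∧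
      (∀ i, 0 < 1 / ((n : ℝ) * (1 + lam * a i))) ∧
      (∑ i, 1 / ((n : ℝ) * (1 + lam * a i))) = 1 ∧
      (∑ i, (1 / ((n : ℝ) * (1 + lam * a i))) * a i) = 0 ∧
      IsGreatest
        {v : ℝ | ∃ p : Fin n → ℝ, (∀ i, 0 ≤ p i) ∧ (∑ i, p i) = 1 ∧
          (∑ i, p i * a i) = 0 ∧ v = ∏ i, ((n : ℝ) * p i)}
        (∏ i, ((n : ℝ) * (1 / ((n : ℝ) * (1 + lam * a i))))) ∧
      (-2 * Real.log (∏ i, ((n : ℝ) * (1 / ((n : ℝ) * (1 + lam * a i))))) =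
        2 * ∑ i, Real.log (1 + lam * a i)) := by
  have hn0 : (0 : ℝ) < n := by exact_mod_cast hn
  -- endpoints for IVT
  obtain ⟨l₁, hl₁0, hl₁den, hl₁pos⟩ := aux_exists_pos n a hpos
  obtain ⟨μ, hμ0, hμden, hμpos⟩ := aux_exists_pos n (fun i => -a i)
    (by obtain ⟨i, hi⟩ := hneg; exact ⟨i, by simpa using hi⟩)
  set l₂ := -μ with hl₂
  have hl₂den : ∀ i, 0 < 1 + l₂ * a i := by
    intro i; have := hμden i
    rw [hl₂]; nlinarith
  have hl₂neg : ∑ i, a i / (1 + l₂ * a i) < 0 := by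
    have : ∑ i, -a i / (1 + μ * -a i) = -∑ i, a i / (1 + l₂ * a i) := by
      rw [← Finset.sum_neg_distrib]
      refine Finset.sum_congr rfl fun i _ => ?_
      rw [neg_div, hl₂]; ring_nf
    rw [this] at hμpos
    linarith
  have hle : l₁ ≤ l₂ := le_trans hl₁0 (by rw [hl₂]; linarith)
  have hdenIcc : ∀ l ∈ Set.Icc l₁ l₂, ∀ i, 0 < 1 + l * a i := by
    rintro l ⟨h1, h2⟩ i
    rcases le_or_gt 0 (a i) with h | h
    · nlinarith [hl₁den i]
    · nlinarith [hl₂den i]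
  have hcont : ContinuousOn (fun l => ∑ i, a i / (1 + l * a i)) (Set.Icc l₁ l₂) := by
    apply continuousOn_finset_sum
    intro i _
    exact ContinuousOn.div continuousOn_const
      (Continuous.continuousOn (by continuity))
      (fun l hl => (hdenIcc l hl i).ne')
  have hivt := intermediate_value_Icc' hle hcont
  have h0mem : (0:ℝ) ∈ Set.Icc (∑ i, a i / (1 + l₂ * a i)) (∑ i, a i / (1 + l₁ * a i)) :=
    ⟨le_of_lt hl₂neg, le_of_lt hl₁pos⟩
  obtain ⟨lam, hlammem, hf0⟩ := hivt h0mem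
  have hd : ∀ i, 0 < 1 + lam * a i := hdenIcc lam hlammem
  have hsum0 : (∑ i, a i / (1 + lam * a i)) = 0 := hf0
  obtain ⟨ip, hip⟩ := hpos
  -- uniqueness
  have huniq : ∀ lam' : ℝ,
      ((∀ i, 0 < 1 + lam' * a i) ∧ (∑ i, a i / (1 + lam' * a i)) = 0) → lam' = lam := by
    rintro lam' ⟨hd', hs'⟩
    by_contra hne
    rcases lt_or_gt_of_ne hne with h | h
    · have : (∑ i, a i / (1 + lam * a i)) < ∑ i, a i / (1 + lam' * a i) :=
        Finset.sum_lt_sum (fun i _ => aux_mono a (le_of_lt h) hd' hd i)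
          ⟨ip, mem_univ ip, aux_mono_strict a h hd' hd hip.ne'⟩
      rw [hsum0, hs'] at this; exact lt_irrefl _ this
    · have : (∑ i, a i / (1 + lam' * a i)) < ∑ i, a i / (1 + lam * a i) :=
        Finset.sum_lt_sum (fun i _ => aux_mono a (le_of_lt h) hd hd' i)
          ⟨ip, mem_univ ip, aux_mono_strict a h hd hd' hip.ne'⟩
      rw [hsum0, hs'] at this; exact lt_irrefl _ this
  -- weights
  have hppos : ∀ i, 0 < 1 / ((n : ℝ) * (1 + lam * a i)) :=
    fun i => one_div_pos.2 (mul_pos hn0 (hd i))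
  have hsum1 : (∑ i, 1 / ((n : ℝ) * (1 + lam * a i))) = 1 := by
    have h1 : ∀ i ∈ univ, 1 / ((n:ℝ) * (1 + lam * a i))
        = (1/n) * (1 - lam * (a i / (1 + lam * a i))) := by
      intro i _
      have hdne := (hd i).ne'
      field_simp
      ring
    rw [Finset.sum_congr rfl h1, ← Finset.mul_sum, Finset.sum_sub_distrib,
      Finset.sum_const, ← Finset.mul_sum, hsum0, Finset.card_univ, Fintype.card_fin]
    field_simp
    simp
  have hsuma : (∑ i, (1 / ((n : ℝ) * (1 + lam * a i))) * a i) = 0 := by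
    have h1 : ∀ i ∈ univ, (1 / ((n:ℝ) * (1 + lam * a i))) * a i
        = (1/n) * (a i / (1 + lam * a i)) := by
      intro i _
      have hdne := (hd i).ne'
      field_simp
    rw [Finset.sum_congr rfl h1, ← Finset.mul_sum, hsum0, mul_zero]
  -- the product with optimal weights
  have hfac : ∀ i, (n:ℝ) * (1 / ((n : ℝ) * (1 + lam * a i))) = 1 / (1 + lam * a i) := by
    intro i
    have hdne := (hd i).ne'
    field_simp
  have hprodpos : 0 < ∏ i, ((n : ℝ) * (1 / ((n : ℝ) * (1 + lam * a i)))) :=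
    Finset.prod_pos fun i _ => by rw [hfac i]; exact one_div_pos.2 (hd i)
  -- IsGreatest
  have hgreat : IsGreatest
      {v : ℝ | ∃ p : Fin n → ℝ, (∀ i, 0 ≤ p i) ∧ (∑ i, p i) = 1 ∧
        (∑ i, p i * a i) = 0 ∧ v = ∏ i, ((n : ℝ) * p i)}
      (∏ i, ((n : ℝ) * (1 / ((n : ℝ) * (1 + lam * a i))))) := by
    constructor
    · exact ⟨fun i => 1 / ((n:ℝ) * (1 + lam * a i)), fun i => (hppos i).le,
        hsum1, hsuma, rfl⟩
    · rintro v ⟨p, hp0, hp1, hpa, rfl⟩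
      by_cases hz : ∃ i, p i = 0
      · obtain ⟨i, hi⟩ := hz
        have : (∏ i, ((n : ℝ) * p i)) = 0 :=
          Finset.prod_eq_zero (mem_univ i) (by rw [hi, mul_zero])
        rw [this]; exact hprodpos.le
      · push_neg at hz
        have hpp : ∀ i, 0 < p i := fun i => lt_of_le_of_ne (hp0 i) (Ne.symm (hz i))
        have hkey : ∀ i ∈ univ, Real.log ((n:ℝ) * p i)
            ≤ Real.log ((n:ℝ) * (1 / ((n : ℝ) * (1 + lam * a i))))
              + (p i * ((n:ℝ) * (1 + lam * a i)) - 1) := by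
          intro i _
          have hx : (0:ℝ) < p i * ((n:ℝ) * (1 + lam * a i)) :=
            mul_pos (hpp i) (mul_pos hn0 (hd i))
          have hlog := Real.log_le_sub_one_of_pos hx
          have heq : p i * ((n:ℝ) * (1 + lam * a i))
              = ((n:ℝ) * p i) / ((n:ℝ) * (1 / ((n : ℝ) * (1 + lam * a i)))) := by
            rw [hfac i]
            have := (hd i).ne'
            field_simp
          rw [heq, Real.log_div (mul_pos hn0 (hpp i)).ne'
            (by rw [hfac i]; exact (one_div_pos.2 (hd i)).ne')] at hlog
          rw [← heq] at hlog
          linarith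
        have hsumineq := Finset.sum_le_sum hkey
        have hsum2 : ∑ i, (p i * ((n:ℝ) * (1 + lam * a i)) - 1) = 0 := by
          have : ∀ i ∈ univ, p i * ((n:ℝ) * (1 + lam * a i))
              = (n:ℝ) * p i + (n:ℝ) * lam * (p i * a i) := by
            intro i _; ring
          rw [Finset.sum_sub_distrib, Finset.sum_congr rfl this, Finset.sum_add_distrib,
            ← Finset.mul_sum, ← Finset.mul_sum, hp1, hpa, Finset.sum_const,
            Finset.card_univ, Fintype.card_fin]
          simp
        rw [Finset.sum_add_distrib, hsum2, add_zero] at hsumineq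
        have e1 : (∏ i, ((n : ℝ) * p i)) = Real.exp (∑ i, Real.log ((n:ℝ) * p i)) := by
          rw [Real.exp_sum]
          exact (Finset.prod_congr rfl fun i _ =>
            (Real.exp_log (mul_pos hn0 (hpp i))).symm)
        have e2 : (∏ i, ((n : ℝ) * (1 / ((n : ℝ) * (1 + lam * a i)))))
            = Real.exp (∑ i, Real.log ((n:ℝ) * (1 / ((n : ℝ) * (1 + lam * a i))))) := by
          rw [Real.exp_sum]
          exact (Finset.prod_congr rfl fun i _ =>
            (Real.exp_log (mul_pos hn0 (hppos i))).symm)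
        rw [e1, e2]
        exact Real.exp_le_exp.2 hsumineq
  -- final log identity
  have hlogid : -2 * Real.log (∏ i, ((n : ℝ) * (1 / ((n : ℝ) * (1 + lam * a i))))) =
      2 * ∑ i, Real.log (1 + lam * a i) := by
    have h1 : (∏ i, ((n : ℝ) * (1 / ((n : ℝ) * (1 + lam * a i)))))
        = ∏ i, (1 + lam * a i)⁻¹ := by
      refine Finset.prod_congr rfl fun i _ => ?_
      rw [hfac i, one_div]
    rw [h1, Real.log_prod (fun i _ => inv_ne_zero (hd i).ne')]
    have h2 : ∀ i ∈ univ, Real.log (1 + lam * a i)⁻¹ = -Real.log (1 + lam * a i) :=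
      fun i _ => Real.log_inv _
    rw [Finset.sum_congr rfl h2, Finset.sum_neg_distrib]
    ring
  exact ⟨lam, ⟨hd, hsum0⟩, huniq, hppos, hsum1, hsuma, hgreat, hlogid⟩
end

section
/- Let (H, d) be a pseudometric space, x₀ ∈ H, and X a random element of H on a probability space such that d(X, x₀) is measurable. Define the small ball probability φ(h) = P(d(X, x₀) ≤ h) and assume φ(h) > 0 for every h > 0. Assume there is a function τ : [0,1] → ℝ such that φ(hs)/φ(h) → τ(s) as h → 0⁺, for every s ∈ [0,1]. Let g : [0,1] → ℝ be continuously differentiable. Then, as h → 0⁺, E[g(d(X, x₀)/h) · 1{d(X, x₀) ≤ h}] / φ(h) → g(1) − ∫₀¹ g′(s) τ(s) ds. -/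
open MeasureTheory Filter

/-- clamp to [0,1] -/
noncomputable def sb_clamp (s : ℝ) : ℝ := max 0 (min 1 s)

lemma sb_clamp_mem (s : ℝ) : sb_clamp s ∈ Set.Icc (0:ℝ) 1 :=
  ⟨le_max_left _ _, max_le zero_le_one (min_le_left _ _)⟩

lemma sb_clamp_of_mem {s : ℝ} (hs : s ∈ Set.Icc (0:ℝ) 1) : sb_clamp s = s := by
  unfold sb_clamp
  rw [min_eq_right hs.2, max_eq_right hs.1]

lemma sb_continuous_clamp : Continuous sb_clamp :=
  continuous_const.max (continuous_const.min continuous_id)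

theorem stmt_6 {H : Type*} [PseudoMetricSpace H]
    {Ω : Type*} [MeasurableSpace Ω] (P : Measure Ω) [IsProbabilityMeasure P]
    (x₀ : H) (X : Ω → H) (hd : Measurable fun ω => dist (X ω) x₀)
    (φ : ℝ → ℝ) (hφdef : ∀ h, φ h = (P {ω | dist (X ω) x₀ ≤ h}).toReal)
    (hφpos : ∀ h > (0 : ℝ), 0 < φ h)
    (τ : ℝ → ℝ)
    (hτ : ∀ s ∈ Set.Icc (0 : ℝ) 1,
      Tendsto (fun h => φ (h * s) / φ h) (nhdsWithin 0 (Set.Ioi 0)) (nhds (τ s)))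
    (g : ℝ → ℝ) (hg : ContDiffOn ℝ 1 g (Set.Icc 0 1)) :
    Tendsto
      (fun h => (∫ ω in {ω | dist (X ω) x₀ ≤ h}, g (dist (X ω) x₀ / h) ∂P) / φ h)
      (nhdsWithin 0 (Set.Ioi 0))
      (nhds (g 1 - ∫ s in (0 : ℝ)..1, derivWithin g (Set.Icc 0 1) s * τ s)) := by
  set D : Ω → ℝ := fun ω => dist (X ω) x₀ with hDdef
  have hD0 : ∀ ω, 0 ≤ D ω := fun ω => dist_nonneg
  have hUD : UniqueDiffOn ℝ (Set.Icc (0:ℝ) 1) := uniqueDiffOn_Icc zero_lt_one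
  set g' : ℝ → ℝ := derivWithin g (Set.Icc 0 1) with hg'def
  have hg'c : ContinuousOn g' (Set.Icc 0 1) := hg.continuousOn_derivWithin hUD le_rfl
  set G : ℝ → ℝ := fun s => g' (sb_clamp s) with hGdef
  have hGcont : Continuous G := hg'c.comp_continuous sb_continuous_clamp sb_clamp_mem
  have hGeq : ∀ s ∈ Set.Icc (0:ℝ) 1, G s = g' s := by
    intro s hs
    rw [hGdef]
    simp only [sb_clamp_of_mem hs]
  -- measurability of sublevel sets
  have hA : ∀ h : ℝ, MeasurableSet {ω | D ω ≤ h} := fun h => hd measurableSet_Iic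
  have hφ0 : ∀ h, 0 ≤ φ h := fun h => by rw [hφdef]; exact ENNReal.toReal_nonneg
  have hφmono : Monotone φ := by
    intro a b hab
    rw [hφdef, hφdef]
    exact ENNReal.toReal_mono (measure_ne_top P _)
      (measure_mono (fun ω hω => le_trans hω hab))
  -- FTC
  have hFTC : ∀ u ∈ Set.Icc (0:ℝ) 1, g u = g 1 - ∫ s in u..1, G s := by
    intro u hu
    have h1 : (∫ s in u..1, G s) = g 1 - g u := by
      apply intervalIntegral.integral_eq_sub_of_hasDeriv_right_of_le hu.2
      · exact hg.continuousOn.mono (Set.Icc_subset_Icc hu.1 le_rfl)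
      · intro x hx
        have hx' : x ∈ Set.Ioo (0:ℝ) 1 := ⟨lt_of_le_of_lt hu.1 hx.1, hx.2⟩
        have hmem : Set.Icc (0:ℝ) 1 ∈ nhds x := Icc_mem_nhds hx'.1 hx'.2
        have hdiff : DifferentiableWithinAt ℝ g (Set.Icc 0 1) x :=
          (hg.differentiableOn one_ne_zero) x (Set.Ioo_subset_Icc_self hx')
        have hder := hdiff.hasDerivWithinAt.hasDerivAt hmem
        rw [hGeq x (Set.Ioo_subset_Icc_self hx')]
        exact hder.hasDerivWithinAt
      · exact hGcont.intervalIntegrable u 1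
    rw [h1]; ring
  -- rewrite interval integral as integral of an indicator over Ioc 0 1
  have hL1 : ∀ u ∈ Set.Icc (0:ℝ) 1,
      (∫ s in u..1, G s) = ∫ s in Set.Ioc (0:ℝ) 1, Set.indicator (Set.Ici u) G s := by
    intro u hu
    rw [MeasureTheory.integral_indicator measurableSet_Ici,
      Measure.restrict_restrict measurableSet_Ici]
    have hset : (Set.Ici u ∩ Set.Ioc 0 1 : Set ℝ) =ᵐ[volume] (Set.Ioc u 1 : Set ℝ) := by
      rw [MeasureTheory.ae_eq_set]
      refine ⟨measure_mono_null ?_ (measure_singleton u),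
        measure_mono_null ?_ measure_empty⟩
      · intro x hx
        simp only [Set.mem_diff, Set.mem_inter_iff, Set.mem_Ici, Set.mem_Ioc] at hx
        have hne : ¬ (u < x ∧ x ≤ 1) := hx.2
        simp only [Set.mem_singleton_iff]
        rcases lt_or_eq_of_le hx.1.1 with h | h
        · exact absurd ⟨h, hx.1.2.2⟩ hne
        · exact h.symm
      · intro x hx
        simp only [Set.mem_diff, Set.mem_Ioc, Set.mem_inter_iff, Set.mem_Ici] at hx
        exact absurd ⟨hx.1.1.le, lt_of_le_of_lt hu.1 hx.1.1, hx.1.2⟩ hx.2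
    rw [Measure.restrict_congr_set hset, intervalIntegral.integral_of_le hu.2]
  -- the key identity
  have hkey : ∀ h ∈ Set.Ioi (0:ℝ),
      (∫ ω in {ω | D ω ≤ h}, g (D ω / h) ∂P)
        = g 1 * φ h - ∫ s in (0:ℝ)..1, G s * φ (h * s) := by
    intro h hh
    have hh0 : (0:ℝ) < h := hh
    set A := {ω | D ω ≤ h} with hAdef
    have hAmeas : MeasurableSet A := hA h
    have hmem : ∀ ω ∈ A, D ω / h ∈ Set.Icc (0:ℝ) 1 := fun ω hω =>
      ⟨div_nonneg (hD0 ω) hh0.le, (div_le_one hh0).2 hω⟩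
    -- the kernel
    set K : Ω × ℝ → ℝ := fun p => if D p.1 ≤ h * p.2 then G p.2 else 0 with hKdef
    have hKmeas : Measurable K := by
      apply Measurable.ite
      · exact measurableSet_le (hd.comp measurable_fst) (measurable_snd.const_mul h)
      · exact hGcont.measurable.comp measurable_snd
      · exact measurable_const
    obtain ⟨C, hC⟩ := isCompact_Icc.exists_bound_of_continuousOn hGcont.continuousOn
    have hKint : Integrable K ((P.restrict A).prod (volume.restrict (Set.Ioc 0 1))) := by
      refine ⟨hKmeas.aestronglyMeasurable, ?_⟩
      apply MeasureTheory.HasFiniteIntegral.of_bounded (C := max C 0)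
      have hae : ∀ᵐ p ∂((P.restrict A).prod (volume.restrict (Set.Ioc 0 1))),
          p.2 ∈ Set.Ioc (0:ℝ) 1 := by
        rw [ae_iff]
        have hseteq : {p : Ω × ℝ | ¬ p.2 ∈ Set.Ioc (0:ℝ) 1}
            = Set.univ ×ˢ (Set.Ioc (0:ℝ) 1)ᶜ := by
          ext p; simp
        rw [hseteq, Measure.prod_prod]
        simp [Measure.restrict_apply (MeasurableSet.compl measurableSet_Ioc)]
      filter_upwards [hae] with p hp
      rw [hKdef]
      by_cases hcase : D p.1 ≤ h * p.2
      · simp only [hcase, if_true]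
        exact le_trans (hC p.2 ⟨hp.1.le, hp.2⟩) (le_max_left _ _)
      · simp only [hcase, if_false, norm_zero]
        exact le_max_right _ _
    have e1 : (∫ ω in A, g (D ω / h) ∂P)
        = ∫ ω in A, (g 1 - ∫ s in Set.Ioc (0:ℝ) 1, K (ω, s)) ∂P := by
      apply setIntegral_congr_fun hAmeas
      intro ω hω
      dsimp only
      rw [hFTC _ (hmem ω hω), hL1 _ (hmem ω hω)]
      congr 1
      apply setIntegral_congr_fun measurableSet_Ioc
      intro s _
      rw [hKdef]
      simp only [Set.indicator_apply, Set.mem_Ici, div_le_iff₀ hh0, mul_comm s h]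
    have hFint : Integrable (fun ω => ∫ s in Set.Ioc (0:ℝ) 1, K (ω, s)) (P.restrict A) :=
      hKint.integral_prod_left
    have e2 : (∫ ω in A, (g 1 - ∫ s in Set.Ioc (0:ℝ) 1, K (ω, s)) ∂P)
        = g 1 * φ h - ∫ ω in A, (∫ s in Set.Ioc (0:ℝ) 1, K (ω, s)) ∂P := by
      rw [MeasureTheory.integral_sub (integrable_const _) hFint]
      congr 1
      rw [setIntegral_const, smul_eq_mul, mul_comm, hφdef]
      rfl
    have e3 : (∫ ω in A, (∫ s in Set.Ioc (0:ℝ) 1, K (ω, s)) ∂P)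
        = ∫ s in Set.Ioc (0:ℝ) 1, (∫ ω in A, K (ω, s) ∂P) :=
      MeasureTheory.integral_integral_swap hKint
    have e4 : ∀ s ∈ Set.Ioc (0:ℝ) 1, (∫ ω in A, K (ω, s) ∂P) = G s * φ (h * s) := by
      intro s hs
      have hs1 : h * s ≤ h := by nlinarith [hs.2, hh0.le]
      have hsub : {ω | D ω ≤ h * s} ⊆ A := fun ω hω => le_trans hω hs1
      have : (fun ω => K (ω, s)) = Set.indicator {ω | D ω ≤ h * s} (fun _ => G s) := by
        funext ω
        rw [hKdef]
        simp [Set.indicator_apply]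
      rw [this, MeasureTheory.integral_indicator (hA (h * s)),
        Measure.restrict_restrict (hA (h * s)),
        Set.inter_eq_self_of_subset_left hsub, setIntegral_const, smul_eq_mul,
        mul_comm, hφdef]
      rfl
    have e5 : (∫ s in Set.Ioc (0:ℝ) 1, (∫ ω in A, K (ω, s) ∂P))
        = ∫ s in (0:ℝ)..1, G s * φ (h * s) := by
      rw [intervalIntegral.integral_of_le zero_le_one]
      exact setIntegral_congr_fun measurableSet_Ioc e4
    rw [e1, e2, e3, e5]
  -- eventual equality of the normalized expression
  have hev : (fun h => (∫ ω in {ω | D ω ≤ h}, g (D ω / h) ∂P) / φ h)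
      =ᶠ[nhdsWithin 0 (Set.Ioi 0)]
      (fun h => g 1 - ∫ s in (0:ℝ)..1, G s * (φ (h * s) / φ h)) := by
    filter_upwards [self_mem_nhdsWithin] with h hh
    have hφh : 0 < φ h := hφpos h hh
    rw [hkey h hh, sub_div, mul_div_assoc, div_self hφh.ne', mul_one]
    congr 1
    rw [← intervalIntegral.integral_div]
    apply intervalIntegral.integral_congr
    intro s _
    exact mul_div_assoc _ _ _
  -- the limit of the integral term
  have hlim : Tendsto (fun h => ∫ s in (0:ℝ)..1, G s * (φ (h * s) / φ h))
      (nhdsWithin 0 (Set.Ioi 0)) (nhds (∫ s in (0:ℝ)..1, G s * τ s)) := by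
    apply intervalIntegral.tendsto_integral_filter_of_dominated_convergence
      (bound := fun s => |G s|)
    · filter_upwards [self_mem_nhdsWithin] with h hh
      have hφm : Measurable fun s => φ (h * s) :=
        hφmono.measurable.comp (measurable_id.const_mul h)
      exact (hGcont.measurable.mul (hφm.div_const _)).aestronglyMeasurable
    · filter_upwards [self_mem_nhdsWithin] with h hh
      apply Filter.Eventually.of_forall
      intro s hs
      have hs' : s ∈ Set.Ioc (0:ℝ) 1 := by rwa [Set.uIoc_of_le zero_le_one] at hs
      have hφh : 0 < φ h := hφpos h hh
      have hq0 : 0 ≤ φ (h * s) / φ h := div_nonneg (hφ0 _) hφh.le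
      have hq1 : φ (h * s) / φ h ≤ 1 := by
        rw [div_le_one hφh]
        exact hφmono (by nlinarith [hs'.2, (Set.mem_Ioi.mp hh).le])
      rw [Real.norm_eq_abs, abs_mul, abs_of_nonneg hq0]
      calc |G s| * (φ (h * s) / φ h) ≤ |G s| * 1 :=
            mul_le_mul_of_nonneg_left hq1 (abs_nonneg _)
        _ = |G s| := mul_one _
    · exact hGcont.abs.intervalIntegrable 0 1
    · apply Filter.Eventually.of_forall
      intro s hs
      have hs' : s ∈ Set.Ioc (0:ℝ) 1 := by rwa [Set.uIoc_of_le zero_le_one] at hs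
      exact tendsto_const_nhds.mul (hτ s ⟨hs'.1.le, hs'.2⟩)
  -- put it together
  have hfinal : (∫ s in (0:ℝ)..1, G s * τ s)
      = ∫ s in (0:ℝ)..1, derivWithin g (Set.Icc 0 1) s * τ s := by
    apply intervalIntegral.integral_congr
    intro s hs
    rw [Set.uIcc_of_le zero_le_one] at hs
    show G s * τ s = g' s * τ s
    rw [hGeq s hs]
  rw [← hfinal]
  exact (tendsto_const_nhds.sub hlim).congr' hev.symm
end

section
/- Let (H, d) be a pseudometric space, x₀ ∈ H, and X a random element of H on a probability space such that d(X, x₀) is measurable. Define φ(h) = P(d(X, x₀) ≤ h), assume φ(h) > 0 for every h > 0, and assume there is τ : [0,1] → ℝ with φ(hs)/φ(h) → τ(s) as h → 0⁺ for every s ∈ [0,1]. Let K : [0,1] → ℝ be continuously differentiable. Then, as h → 0⁺, writing D = d(X, x₀) and 1_h = 1{D ≤ h}: (i) E[K(D/h) 1_h]/φ(h) → M₁ := K(1) − ∫₀¹ K′(s)τ(s) ds; (ii) E[K(D/h)² 1_h]/φ(h) → M₂ := K(1)² − ∫₀¹ (K²)′(s)τ(s) ds; (iii) E[(D/h) K(D/h)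 1_h]/φ(h) → M₀ := K(1) − ∫₀¹ (sK(s))′ τ(s) ds. -/
open MeasureTheory Filter

lemma key_lemma {Ω : Type*} [MeasurableSpace Ω] (P : Measure Ω) [IsProbabilityMeasure P]
    (D : Ω → ℝ) (hD : Measurable D) (hD0 : ∀ ω, 0 ≤ D ω)
    (φ : ℝ → ℝ) (hφdef : ∀ h, φ h = (P {ω | D ω ≤ h}).toReal)
    (hφpos : ∀ h > (0 : ℝ), 0 < φ h)
    (τ : ℝ → ℝ)
    (hτ : ∀ s ∈ Set.Icc (0 : ℝ) 1,
      Tendsto (fun h => φ (h * s) / φ h) (nhdsWithin 0 (Set.Ioi 0)) (nhds (τ s)))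
    (F : ℝ → ℝ) (hF : ContDiffOn ℝ 1 F (Set.Icc 0 1)) :
    Tendsto (fun h => (∫ ω in {ω | D ω ≤ h}, F (D ω / h) ∂P) / φ h)
      (nhdsWithin 0 (Set.Ioi 0))
      (nhds (F 1 - ∫ s in (0 : ℝ)..1, derivWithin F (Set.Icc 0 1) s * τ s)) := by
  have hφmono : Monotone φ := by
    intro a b hab
    rw [hφdef a, hφdef b]
    exact ENNReal.toReal_mono (measure_ne_top P _)
      (measure_mono fun ω hω => le_trans hω hab)
  have hφmeas : Measurable φ := hφmono.measurable
  set F' : ℝ → ℝ := derivWithin F (Set.Icc 0 1) with hF'def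
  have hF'cont : ContinuousOn F' (Set.Icc 0 1) :=
    hF.continuousOn_derivWithin (uniqueDiffOn_Icc one_pos) le_rfl
  -- clamp to get a globally continuous extension of F'
  set cl : ℝ → ℝ := fun s => max 0 (min 1 s) with hcl
  have hclmem : ∀ s, cl s ∈ Set.Icc (0 : ℝ) 1 :=
    fun s => ⟨le_max_left _ _, max_le zero_le_one (min_le_left _ _)⟩
  have hclcont : Continuous cl := continuous_const.max (continuous_const.min continuous_id)
  set F'' : ℝ → ℝ := fun s => F' (cl s) with hF''def
  have hF''cont : Continuous F'' := hF'cont.comp_continuous hclcont hclmem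
  have hF''eq : ∀ s ∈ Set.Icc (0 : ℝ) 1, F'' s = F' s := by
    intro s hs
    have : cl s = s := by
      rw [hcl]; simp only [min_eq_right hs.2, max_eq_right hs.1]
    rw [hF''def]; simp only [this]
  obtain ⟨C, hC⟩ : ∃ C, ∀ x ∈ Set.Icc (0 : ℝ) 1, ‖F' x‖ ≤ C :=
    isCompact_Icc.exists_bound_of_continuousOn hF'cont
  have hC'' : ∀ s, ‖F'' s‖ ≤ C := fun s => hC _ (hclmem s)
  -- FTC
  have ftc : ∀ a ∈ Set.Icc (0 : ℝ) 1, ∫ s in a..1, F' s = F 1 - F a := by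
    intro a ha
    apply intervalIntegral.integral_eq_sub_of_hasDeriv_right_of_le ha.2
    · exact hF.continuousOn.mono (Set.Icc_subset_Icc ha.1 le_rfl)
    · intro x hx
      have hx' : x ∈ Set.Icc (0 : ℝ) 1 := ⟨le_trans ha.1 hx.1.le, hx.2.le⟩
      have h1 := (hF.differentiableOn one_ne_zero x hx').hasDerivWithinAt
      have h2 : HasDerivAt F (F' x) x :=
        h1.hasDerivAt (Icc_mem_nhds (lt_of_le_of_lt ha.1 hx.1) hx.2)
      exact h2.hasDerivWithinAt
    · exact (hF'cont.mono (Set.Icc_subset_Icc ha.1 le_rfl)).intervalIntegrable_of_Icc ha.2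
  set S : ℝ → Set Ω := fun t => {ω | D ω ≤ t} with hS
  have hSmeas : ∀ t, MeasurableSet (S t) := fun t => measurableSet_le hD measurable_const
  have hSsub : ∀ {a b : ℝ}, a ≤ b → S a ⊆ S b := fun hab ω hω => le_trans hω hab
  -- key identity
  have key : ∀ h : ℝ, 0 < h →
      (∫ ω in S h, F (D ω / h) ∂P)
        = F 1 * φ h - ∫ s in Set.Ioc (0 : ℝ) 1, F'' s * φ (h * s) := by
    intro h hh
    set G : Ω × ℝ → ℝ :=
      fun q => if D q.1 ≤ h * q.2 then F'' q.2 else 0 with hG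
    have hGsetmeas : MeasurableSet {q : Ω × ℝ | D q.1 ≤ h * q.2} :=
      measurableSet_le (hD.comp measurable_fst) (measurable_const.mul measurable_snd)
    have hGmeas : Measurable G :=
      Measurable.ite hGsetmeas (hF''cont.measurable.comp measurable_snd) measurable_const
    have hGbdd : ∀ q, ‖G q‖ ≤ C := by
      intro q
      show ‖if D q.1 ≤ h * q.2 then F'' q.2 else 0‖ ≤ C
      by_cases hq : D q.1 ≤ h * q.2
      · rw [if_pos hq]; exact hC'' _
      · rw [if_neg hq]
        simp only [norm_zero]
        exact le_trans (norm_nonneg (F'' 0)) (hC'' 0)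
    haveI : Fact ((volume : Measure ℝ) (Set.Ioc (0 : ℝ) 1) < ⊤) := ⟨by simp⟩
    have hGint : Integrable G ((P.restrict (S h)).prod (volume.restrict (Set.Ioc 0 1))) :=
      (integrable_const C).mono' hGmeas.aestronglyMeasurable (ae_of_all _ hGbdd)
    -- pointwise identity
    have step1 : ∀ ω ∈ S h,
        F (D ω / h) = F 1 - ∫ s in Set.Ioc (0 : ℝ) 1, G (ω, s) := by
      intro ω hω
      set a := D ω / h with hadef
      have ha : a ∈ Set.Icc (0 : ℝ) 1 :=
        ⟨div_nonneg (hD0 ω) hh.le, (div_le_one hh).2 hω⟩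
      have h1 : ∀ s : ℝ, (D ω ≤ h * s) ↔ a ≤ s := by
        intro s
        rw [hadef, div_le_iff₀ hh, mul_comm]
      have h2 : (fun s => G (ω, s)) = Set.indicator (Set.Ici a) F'' := by
        funext s
        show (if D ω ≤ h * s then F'' s else 0) = Set.indicator (Set.Ici a) F'' s
        rw [Set.indicator_apply]
        exact if_congr ((h1 s).trans (Set.mem_Ici).symm) rfl rfl
      have h3 : (∫ s in Set.Ioc (0 : ℝ) 1, G (ω, s))
          = ∫ s in Set.Ioc (0 : ℝ) 1, Set.indicator (Set.Ici a) F'' s := by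
        rw [h2]
      have hae : (Set.Ioc (0 : ℝ) 1 ∩ Set.Ici a : Set ℝ) =ᵐ[volume] Set.Ioc a 1 := by
        have h0 : (volume : Measure ℝ) {a} = 0 := measure_singleton a
        rw [Filter.eventuallyEq_set]
        filter_upwards [measure_eq_zero_iff_ae_notMem.mp h0] with x hx
        simp only [Set.mem_inter_iff, Set.mem_Ioc, Set.mem_Ici, Set.mem_singleton_iff] at hx ⊢
        constructor
        · rintro ⟨⟨_, hx1⟩, hax⟩
          exact ⟨lt_of_le_of_ne hax (Ne.symm hx), hx1⟩
        · rintro ⟨hax, hx1⟩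
          exact ⟨⟨lt_of_le_of_lt ha.1 hax, hx1⟩, hax.le⟩
      have h4 : (∫ s in Set.Ioc (0 : ℝ) 1, G (ω, s)) = ∫ s in Set.Ioc a 1, F' s := by
        rw [h3, setIntegral_indicator measurableSet_Ici, setIntegral_congr_set hae]
        exact setIntegral_congr_fun measurableSet_Ioc fun s hs =>
          hF''eq s ⟨le_trans ha.1 hs.1.le, hs.2⟩
      have h5 : (∫ s in Set.Ioc a 1, F' s) = F 1 - F a := by
        rw [← intervalIntegral.integral_of_le ha.2]
        exact ftc a ha
      rw [h4, h5]; ring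
    have step2 : (∫ ω in S h, F (D ω / h) ∂P)
        = ∫ ω in S h, (F 1 - ∫ s in Set.Ioc (0 : ℝ) 1, G (ω, s)) ∂P :=
      setIntegral_congr_fun (hSmeas h) step1
    have hginteg : Integrable (fun ω => ∫ s in Set.Ioc (0 : ℝ) 1, G (ω, s))
        (P.restrict (S h)) := hGint.integral_prod_left
    have step3 : (∫ ω in S h, (F 1 - ∫ s in Set.Ioc (0 : ℝ) 1, G (ω, s)) ∂P)
        = F 1 * φ h - ∫ ω in S h, (∫ s in Set.Ioc (0 : ℝ) 1, G (ω, s)) ∂P := by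
      rw [integral_sub (integrable_const _) hginteg, setIntegral_const, smul_eq_mul,
        hφdef h, mul_comm]; rfl
    have step4 : (∫ ω in S h, (∫ s in Set.Ioc (0 : ℝ) 1, G (ω, s)) ∂P)
        = ∫ s in Set.Ioc (0 : ℝ) 1, (∫ ω in S h, G (ω, s) ∂P) :=
      integral_integral_swap hGint
    have step5 : (∫ s in Set.Ioc (0 : ℝ) 1, (∫ ω in S h, G (ω, s) ∂P))
        = ∫ s in Set.Ioc (0 : ℝ) 1, F'' s * φ (h * s) := by
      apply setIntegral_congr_fun measurableSet_Ioc
      intro s hs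
      have hGs : (fun ω => G (ω, s)) = Set.indicator (S (h * s)) (fun _ => F'' s) := by
        funext ω
        show (if D ω ≤ h * s then F'' s else 0) = Set.indicator (S (h * s)) (fun _ => F'' s) ω
        rw [Set.indicator_apply]
        exact if_congr Iff.rfl rfl rfl
      have hsub : S (h * s) ⊆ S h := hSsub (mul_le_of_le_one_right hh.le hs.2)
      calc (∫ ω in S h, G (ω, s) ∂P)
          = ∫ ω in S h, Set.indicator (S (h * s)) (fun _ => F'' s) ω ∂P := by rw [hGs]
        _ = ∫ ω in S h ∩ S (h * s), F'' s ∂P := setIntegral_indicator (hSmeas _)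
        _ = (P (S h ∩ S (h * s))).toReal • F'' s := setIntegral_const _
        _ = F'' s * φ (h * s) := by
            rw [Set.inter_eq_right.mpr hsub, smul_eq_mul, mul_comm, hφdef]
    rw [step2, step3, step4, step5]
  -- the rescaled identity
  have hcongr : ∀ᶠ h in nhdsWithin (0 : ℝ) (Set.Ioi 0),
      F 1 - (∫ s in Set.Ioc (0 : ℝ) 1, F'' s * (φ (h * s) / φ h))
        = (∫ ω in S h, F (D ω / h) ∂P) / φ h := by
    filter_upwards [self_mem_nhdsWithin] with h hh
    rw [key h hh, sub_div, mul_div_assoc,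
      div_self (hφpos h hh).ne', mul_one, ← integral_div]
    congr 1
    apply setIntegral_congr_fun measurableSet_Ioc
    intro s _
    exact (mul_div_assoc _ _ _).symm
  -- dominated convergence
  have hdom : Tendsto (fun h => ∫ s in Set.Ioc (0 : ℝ) 1, F'' s * (φ (h * s) / φ h))
      (nhdsWithin (0 : ℝ) (Set.Ioi 0))
      (nhds (∫ s in Set.Ioc (0 : ℝ) 1, F'' s * τ s)) := by
    apply tendsto_integral_filter_of_dominated_convergence (fun _ => C)
    · apply Filter.Eventually.of_forall
      intro h
      exact ((hF''cont.measurable.mul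
        ((hφmeas.comp (measurable_id.const_mul h)).div_const _))).aestronglyMeasurable
    · filter_upwards [self_mem_nhdsWithin] with h hh
      rw [ae_restrict_iff' measurableSet_Ioc]
      apply Filter.Eventually.of_forall
      intro s hs
      have hq0 : 0 ≤ φ (h * s) / φ h := by
        apply div_nonneg _ (hφpos h hh).le
        rw [hφdef]; exact ENNReal.toReal_nonneg
      have hq1 : φ (h * s) / φ h ≤ 1 :=
        (div_le_one (hφpos h hh)).2 (hφmono (mul_le_of_le_one_right hh.le hs.2))
      calc ‖F'' s * (φ (h * s) / φ h)‖ = ‖F'' s‖ * ‖φ (h * s) / φ h‖ := norm_mul _ _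
        _ ≤ C * 1 := by
            apply mul_le_mul (hC'' s) _ (norm_nonneg _)
              (le_trans (norm_nonneg _) (hC'' 0))
            rw [Real.norm_eq_abs, abs_of_nonneg hq0]; exact hq1
        _ = C := mul_one C
    · haveI : Fact ((volume : Measure ℝ) (Set.Ioc (0 : ℝ) 1) < ⊤) := ⟨by simp⟩
      exact integrable_const C
    · rw [ae_restrict_iff' measurableSet_Ioc]
      apply Filter.Eventually.of_forall
      intro s hs
      exact tendsto_const_nhds.mul (hτ s (Set.Ioc_subset_Icc_self hs))
  have hval : (∫ s in Set.Ioc (0 : ℝ) 1, F'' s * τ s)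
      = ∫ s in (0 : ℝ)..1, F' s * τ s := by
    rw [intervalIntegral.integral_of_le zero_le_one]
    exact setIntegral_congr_fun measurableSet_Ioc fun s hs => by
      rw [hF''eq s (Set.Ioc_subset_Icc_self hs)]
  have := (tendsto_const_nhds.sub hdom).congr' hcongr
  rw [hval] at this
  exact this

theorem stmt_7 {H : Type*} [PseudoMetricSpace H]
    {Ω : Type*} [MeasurableSpace Ω] (P : Measure Ω) [IsProbabilityMeasure P]
    (x₀ : H) (X : Ω → H) (hd : Measurable fun ω => dist (X ω) x₀)
    (φ : ℝ → ℝ) (hφdef : ∀ h, φ h = (P {ω | dist (X ω) x₀ ≤ h}).toReal)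
    (hφpos : ∀ h > (0 : ℝ), 0 < φ h)
    (τ : ℝ → ℝ)
    (hτ : ∀ s ∈ Set.Icc (0 : ℝ) 1,
      Tendsto (fun h => φ (h * s) / φ h) (nhdsWithin 0 (Set.Ioi 0)) (nhds (τ s)))
    (K : ℝ → ℝ) (hK : ContDiffOn ℝ 1 K (Set.Icc 0 1)) :
    Tendsto
      (fun h => (∫ ω in {ω | dist (X ω) x₀ ≤ h}, K (dist (X ω) x₀ / h) ∂P) / φ h)
      (nhdsWithin 0 (Set.Ioi 0))
      (nhds (K 1 - ∫ s in (0 : ℝ)..1, derivWithin K (Set.Icc 0 1) s * τ s)) ∧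
    Tendsto
      (fun h => (∫ ω in {ω | dist (X ω) x₀ ≤ h}, (K (dist (X ω) x₀ / h)) ^ 2 ∂P) / φ h)
      (nhdsWithin 0 (Set.Ioi 0))
      (nhds ((K 1) ^ 2 -
        ∫ s in (0 : ℝ)..1, derivWithin (fun t => (K t) ^ 2) (Set.Icc 0 1) s * τ s)) ∧
    Tendsto
      (fun h =>
        (∫ ω in {ω | dist (X ω) x₀ ≤ h},
          (dist (X ω) x₀ / h) * K (dist (X ω) x₀ / h) ∂P) / φ h)
      (nhdsWithin 0 (Set.Ioi 0))
      (nhds (K 1 -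
        ∫ s in (0 : ℝ)..1, derivWithin (fun t => t * K t) (Set.Icc 0 1) s * τ s)) := by
  refine ⟨?_, ?_, ?_⟩
  · exact key_lemma P _ hd (fun ω => dist_nonneg) φ hφdef hφpos τ hτ K hK
  · exact key_lemma P _ hd (fun ω => dist_nonneg) φ hφdef hφpos τ hτ
      (fun t => (K t) ^ 2) (hK.pow 2)
  · have := key_lemma P _ hd (fun ω => dist_nonneg) φ hφdef hφpos τ hτ
      (fun t => t * K t) (contDiffOn_id.mul hK)
    simpa using this
end

section
/- Let (H, d) be a pseudometric space, x₀ ∈ H, and let X be a random element of H on a probability space (Ω, F, P) such that d(X, x₀) is measurable. Let ε be a real random variable with E[ε²] < ∞, E[ε | σ(X)] = 0 almost surely, and E[ε² | σ(X)] = σ²(X) almost surely, where σ² : H → [0, ∞) is measurable and continuous at x₀. Let r : H → ℝ be measurable and continuous at x₀, and set Y = r(X) + ε. Let K : [0, ∞) → [0, ∞) be bounded and measurable with K(u) = 0 for u > 1, write K_h = K(d(X, x₀)/h), and assume E[K_h²] > 0 for all sufficiently small h > 0. Then for every fixed μ ∈ ℝ, E[K_h² (Y − μ)²] / E[K_h²]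 → σ²(x₀) + (r(x₀) − μ)² as h → 0⁺. -/
open MeasureTheory Filter

private lemma pullout {H : Type*} {Ω : Type*} [MeasurableSpace H] [m0 : MeasurableSpace Ω]
    {X : Ω → H} (hX : Measurable X)
    (P : Measure Ω) [IsProbabilityMeasure P] {φ : H → ℝ} (hφ : Measurable φ)
    {q : Ω → ℝ} {c : ℝ} (hfb : ∀ ω, ‖φ (X ω)‖ ≤ c) (hq : Integrable q P) :
    ∫ ω, φ (X ω) * q ω ∂P
      = ∫ ω, φ (X ω) * (P[q|MeasurableSpace.comap X inferInstance]) ω ∂P := by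
  have hm : MeasurableSpace.comap X inferInstance ≤ m0 := hX.comap_le
  have hφX : StronglyMeasurable[MeasurableSpace.comap X inferInstance] (fun ω => φ (X ω)) := by
    refine Measurable.stronglyMeasurable ?_
    exact fun s hs => ⟨φ ⁻¹' s, hφ hs, rfl⟩
  have h1 := condExp_stronglyMeasurable_mul_of_bound hm hφX hq c (ae_of_all _ hfb)
  calc ∫ ω, φ (X ω) * q ω ∂P
      = ∫ ω, ((fun ω => φ (X ω)) * q) ω ∂P := rfl
    _ = ∫ ω, (P[(fun ω => φ (X ω)) * q|MeasurableSpace.comap X inferInstance]) ω ∂P :=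
        (integral_condExp (μ := P) (f := (fun ω => φ (X ω)) * q) hm).symm
    _ = ∫ ω, φ (X ω) * (P[q|MeasurableSpace.comap X inferInstance]) ω ∂P :=
        integral_congr_ae h1

theorem stmt_11 {H : Type*} [PseudoMetricSpace H] [MeasurableSpace H] [BorelSpace H]
    {Ω : Type*} [MeasurableSpace Ω] (P : Measure Ω) [IsProbabilityMeasure P]
    (x₀ : H) (X : Ω → H) (hX : Measurable X)
    (ε : Ω → ℝ) (hεmeas : Measurable ε)
    (hε2 : Integrable (fun ω => (ε ω) ^ 2) P)
    (hcond : P[ε|MeasurableSpace.comap X inferInstance] =ᵐ[P] 0)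
    (σ2 : H → ℝ) (hσ2meas : Measurable σ2) (hσ2nn : ∀ x, 0 ≤ σ2 x)
    (hσ2cont : ContinuousAt σ2 x₀)
    (hcond2 : P[(fun ω => (ε ω) ^ 2)|MeasurableSpace.comap X inferInstance]
      =ᵐ[P] fun ω => σ2 (X ω))
    (r : H → ℝ) (hrmeas : Measurable r) (hrcont : ContinuousAt r x₀)
    (Y : Ω → ℝ) (hY : ∀ ω, Y ω = r (X ω) + ε ω)
    (K : ℝ → ℝ) (hKmeas : Measurable K) (hKnn : ∀ u, 0 ≤ u → 0 ≤ K u)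
    (hKbdd : ∃ B, ∀ u, 0 ≤ u → K u ≤ B) (hKsupp : ∀ u, 1 < u → K u = 0)
    (hpos : ∃ h₀ > (0 : ℝ), ∀ h ∈ Set.Ioo (0 : ℝ) h₀,
      0 < ∫ ω, (K (dist (X ω) x₀ / h)) ^ 2 ∂P)
    (μ : ℝ) :
    Tendsto
      (fun h => (∫ ω, (K (dist (X ω) x₀ / h)) ^ 2 * (Y ω - μ) ^ 2 ∂P) /
        (∫ ω, (K (dist (X ω) x₀ / h)) ^ 2 ∂P))
      (nhdsWithin 0 (Set.Ioi 0)) (nhds (σ2 x₀ + (r x₀ - μ) ^ 2)) := by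
  obtain ⟨B, hB⟩ := hKbdd
  have hBnn : 0 ≤ B := le_trans (hKnn 0 le_rfl) (hB 0 le_rfl)
  obtain ⟨h₀, hh₀, hposD⟩ := hpos
  have hε_int : Integrable ε P :=
    ((memLp_two_iff_integrable_sq hεmeas.aestronglyMeasurable).mpr hε2).integrable one_le_two
  obtain ⟨δr, hδr_pos, hδr⟩ := Metric.continuousAt_iff.mp hrcont 1 one_pos
  set g : H → ℝ := fun x => (r x - μ) ^ 2 + σ2 x with hg_def
  have hgcont : ContinuousAt g x₀ := ((hrcont.sub continuousAt_const).pow 2).add hσ2cont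
  rw [Metric.tendsto_nhdsWithin_nhds]
  intro η hη
  obtain ⟨δg, hδg_pos, hδg⟩ := Metric.continuousAt_iff.mp hgcont (η/2) (by positivity)
  refine ⟨min (min δg δr) h₀, by positivity, ?_⟩
  intro h hh' hdist
  have hh : (0:ℝ) < h := hh'
  rw [Real.dist_eq, sub_zero, abs_of_pos hh] at hdist
  have hhδg : h < δg := lt_of_lt_of_le hdist (le_trans (min_le_left _ _) (min_le_left _ _))
  have hhδr : h < δr := lt_of_lt_of_le hdist (le_trans (min_le_left _ _) (min_le_right _ _))
  have hhh₀ : h < h₀ := lt_of_lt_of_le hdist (min_le_right _ _)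
  -- the weight function
  set φ : H → ℝ := fun x => (K (dist x x₀ / h)) ^ 2 with hφ_def
  have hdistmeas : Measurable (fun x : H => dist x x₀) :=
    (continuous_id.dist continuous_const).measurable
  have hφmeas : Measurable φ := (hKmeas.comp (hdistmeas.div_const h)).pow_const 2
  set W : Ω → ℝ := fun ω => φ (X ω) with hW_def
  have hWmeas : Measurable W := hφmeas.comp hX
  have hWnn : ∀ ω, 0 ≤ W ω := fun ω => sq_nonneg _
  have hWb : ∀ ω, W ω ≤ B ^ 2 := by
    intro ω
    have h1 : 0 ≤ dist (X ω) x₀ / h := div_nonneg dist_nonneg hh.le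
    exact pow_le_pow_left₀ (hKnn _ h1) (hB _ h1) 2
  have hWbn : ∀ ω, ‖W ω‖ ≤ B ^ 2 := fun ω => by
    rw [Real.norm_eq_abs, abs_of_nonneg (hWnn ω)]; exact hWb ω
  have hsupp : ∀ ω, h < dist (X ω) x₀ → W ω = 0 := by
    intro ω hd
    have : 1 < dist (X ω) x₀ / h := (one_lt_div hh).mpr hd
    simp [hW_def, hφ_def, hKsupp _ this]
  -- integrability facts
  have hWint : Integrable W P :=
    (integrable_const (B ^ 2)).mono' hWmeas.aestronglyMeasurable (ae_of_all _ hWbn)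
  -- bound on r near x₀ on the support
  have hrb : ∀ ω, W ω ≠ 0 → |r (X ω) - μ| ≤ |r x₀ - μ| + 1 := by
    intro ω hWne
    have hd : dist (X ω) x₀ ≤ h := by
      by_contra hcon; exact hWne (hsupp ω (lt_of_not_ge hcon))
    have := hδr (lt_of_le_of_lt hd hhδr)
    rw [Real.dist_eq] at this
    calc |r (X ω) - μ| = |(r (X ω) - r x₀) + (r x₀ - μ)| := by ring_nf
      _ ≤ |r (X ω) - r x₀| + |r x₀ - μ| := abs_add_le _ _
      _ ≤ |r x₀ - μ| + 1 := by linarith [this.le]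
  -- the three pieces
  set ψ : H → ℝ := fun x => φ x * (2 * (r x - μ)) with hψ_def
  have hψmeas : Measurable ψ := hφmeas.mul ((hrmeas.sub measurable_const).const_mul 2)
  set a : Ω → ℝ := fun ω => W ω * (r (X ω) - μ) ^ 2 with ha_def
  have hψb : ∀ ω, ‖ψ (X ω)‖ ≤ B ^ 2 * (2 * (|r x₀ - μ| + 1)) := by
    intro ω
    by_cases hWne : W ω = 0
    · have : ψ (X ω) = 0 := by
        simp only [hψ_def]
        simp only [hW_def] at hWne
        rw [hWne, zero_mul]
      rw [this, norm_zero]; positivity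
    · rw [Real.norm_eq_abs, abs_mul, abs_mul, abs_two]
      rw [show |φ (X ω)| = W ω from abs_of_nonneg (hWnn ω)]
      exact mul_le_mul (hWb ω) (by linarith [hrb ω hWne]) (by positivity) (by positivity)
  have hameas : Measurable a :=
    hWmeas.mul (((hrmeas.comp hX).sub measurable_const).pow_const 2)
  have hab : ∀ ω, ‖a ω‖ ≤ B ^ 2 * (|r x₀ - μ| + 1) ^ 2 := by
    intro ω
    by_cases hWne : W ω = 0
    · simp only [ha_def, hWne, zero_mul, norm_zero]; positivity
    · rw [Real.norm_eq_abs, abs_mul, abs_of_nonneg (hWnn ω), abs_pow, sq_abs]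
      refine mul_le_mul (hWb ω) ?_ (sq_nonneg _) (by positivity)
      calc (r (X ω) - μ) ^ 2 = |r (X ω) - μ| ^ 2 := (sq_abs _).symm
        _ ≤ (|r x₀ - μ| + 1) ^ 2 := pow_le_pow_left₀ (abs_nonneg _) (hrb ω hWne) 2
  have ha_int : Integrable a P :=
    (integrable_const _).mono' hameas.aestronglyMeasurable (ae_of_all _ hab)
  have hb_int : Integrable (fun ω => ψ (X ω) * ε ω) P :=
    hε_int.bdd_mul ((hψmeas.comp hX).aestronglyMeasurable) (ae_of_all _ hψb)
  have hc_int : Integrable (fun ω => W ω * (ε ω) ^ 2) P :=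
    hε2.bdd_mul hWmeas.aestronglyMeasurable (ae_of_all _ hWbn)
  -- cross term vanishes
  have hE1 : ∫ ω, ψ (X ω) * ε ω ∂P = 0 := by
    rw [pullout hX P hψmeas hψb hε_int]
    rw [show (0:ℝ) = ∫ ω, (0:ℝ) ∂P by simp]
    refine integral_congr_ae ?_
    filter_upwards [hcond] with ω hω
    rw [hω]; simp
  -- second moment term
  have hE2 : ∫ ω, W ω * (ε ω) ^ 2 ∂P = ∫ ω, W ω * σ2 (X ω) ∂P := by
    have hφbn : ∀ ω, ‖φ (X ω)‖ ≤ B ^ 2 := hWbn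
    rw [pullout hX P hφmeas hφbn hε2]
    refine integral_congr_ae ?_
    filter_upwards [hcond2] with ω hω
    rw [hω]
  -- W·g(X) bound and integrability
  have hgb : ∀ ω, W ω ≠ 0 → |g (X ω) - g x₀| ≤ η / 2 := by
    intro ω hWne
    have hd : dist (X ω) x₀ ≤ h := by
      by_contra hcon; exact hWne (hsupp ω (lt_of_not_ge hcon))
    have := hδg (lt_of_le_of_lt hd hhδg)
    rw [Real.dist_eq] at this
    exact this.le
  have hgmeas : Measurable g := ((hrmeas.sub measurable_const).pow_const 2).add hσ2meas
  have hWg_meas : Measurable (fun ω => W ω * g (X ω)) := hWmeas.mul (hgmeas.comp hX)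
  have hWg_bound : ∀ ω, ‖W ω * g (X ω)‖ ≤ B ^ 2 * (|g x₀| + η / 2) := by
    intro ω
    by_cases hWne : W ω = 0
    · rw [hWne, zero_mul, norm_zero]; positivity
    · rw [Real.norm_eq_abs, abs_mul, abs_of_nonneg (hWnn ω)]
      refine mul_le_mul (hWb ω) ?_ (abs_nonneg _) (by positivity)
      calc |g (X ω)| ≤ |g (X ω) - g x₀| + |g x₀| := by
            simpa using abs_add_le (g (X ω) - g x₀) (g x₀)
        _ ≤ |g x₀| + η / 2 := by linarith [hgb ω hWne]
  have hWg_int : Integrable (fun ω => W ω * g (X ω)) P :=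
    (integrable_const _).mono' hWg_meas.aestronglyMeasurable (ae_of_all _ hWg_bound)
  have hWσ_int : Integrable (fun ω => W ω * σ2 (X ω)) P := by
    refine (hWg_int.sub ha_int).congr (ae_of_all _ fun ω => ?_)
    simp only [Pi.sub_apply, hg_def, ha_def]; ring
  -- main identity
  have key : ∫ ω, W ω * (Y ω - μ) ^ 2 ∂P = ∫ ω, W ω * g (X ω) ∂P := by
    have hpt : ∀ ω, W ω * (Y ω - μ) ^ 2
        = a ω + (ψ (X ω) * ε ω + W ω * (ε ω) ^ 2) := by
      intro ω; rw [hY ω]; simp only [ha_def, hψ_def, hW_def]; ring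
    calc ∫ ω, W ω * (Y ω - μ) ^ 2 ∂P
        = ∫ ω, (a ω + (ψ (X ω) * ε ω + W ω * (ε ω) ^ 2)) ∂P :=
          integral_congr_ae (ae_of_all _ hpt)
      _ = ∫ ω, a ω ∂P + ∫ ω, (ψ (X ω) * ε ω + W ω * (ε ω) ^ 2) ∂P :=
          integral_add ha_int (hb_int.add hc_int)
      _ = ∫ ω, a ω ∂P + (∫ ω, ψ (X ω) * ε ω ∂P + ∫ ω, W ω * (ε ω) ^ 2 ∂P) := by
          rw [integral_add hb_int hc_int]
      _ = ∫ ω, a ω ∂P + ∫ ω, W ω * σ2 (X ω) ∂P := by rw [hE1, hE2]; ring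
      _ = ∫ ω, (a ω + W ω * σ2 (X ω)) ∂P := (integral_add ha_int hWσ_int).symm
      _ = ∫ ω, W ω * g (X ω) ∂P := by
          refine integral_congr_ae (ae_of_all _ fun ω => ?_)
          simp only [ha_def, hg_def]; ring
  -- final estimate
  set D : ℝ := ∫ ω, W ω ∂P with hD_def
  have hD : 0 < D := hposD h ⟨hh, hhh₀⟩
  have hdiff : ∫ ω, W ω * (Y ω - μ) ^ 2 ∂P - g x₀ * D
      = ∫ ω, W ω * (g (X ω) - g x₀) ∂P := by
    rw [key, hD_def, ← integral_const_mul (g x₀)]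
    rw [← integral_sub hWg_int (hWint.const_mul (g x₀))]
    refine integral_congr_ae (ae_of_all _ fun ω => ?_)
    ring
  have hbound : |∫ ω, W ω * (g (X ω) - g x₀) ∂P| ≤ η / 2 * D := by
    calc |∫ ω, W ω * (g (X ω) - g x₀) ∂P| ≤ ∫ ω, |W ω * (g (X ω) - g x₀)| ∂P := by
          simpa [Real.norm_eq_abs, abs_mul] using
            norm_integral_le_integral_norm (μ := P) (fun ω => W ω * (g (X ω) - g x₀))
      _ ≤ ∫ ω, η / 2 * W ω ∂P := by
          refine integral_mono ?_ (hWint.const_mul _) fun ω => ?_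
          · exact ((hWg_int.sub (hWint.const_mul (g x₀))).congr
              (ae_of_all _ fun ω => by simp only [Pi.sub_apply]; ring)).abs
          · by_cases hWne : W ω = 0
            · simp [hWne]
            · rw [abs_mul, abs_of_nonneg (hWnn ω)]
              calc W ω * |g (X ω) - g x₀| ≤ W ω * (η / 2) :=
                    mul_le_mul_of_nonneg_left (hgb ω hWne) (hWnn ω)
                _ = η / 2 * W ω := by ring
      _ = η / 2 * D := by rw [integral_const_mul]
  rw [Real.dist_eq]
  have hgx₀ : σ2 x₀ + (r x₀ - μ) ^ 2 = g x₀ := by simp only [hg_def]; ring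
  rw [hgx₀]
  have hq : (∫ ω, W ω * (Y ω - μ) ^ 2 ∂P) / D - g x₀
      = (∫ ω, W ω * (Y ω - μ) ^ 2 ∂P - g x₀ * D) / D := by
    field_simp
  calc |(∫ ω, W ω * (Y ω - μ) ^ 2 ∂P) / D - g x₀|
      = |∫ ω, W ω * (g (X ω) - g x₀) ∂P| / D := by
        rw [hq, hdiff, abs_div, abs_of_pos hD]
    _ ≤ (η / 2 * D) / D := by gcongr
    _ < η := by
        rw [mul_div_assoc, div_self hD.ne', mul_one]; linarith
end
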